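/- Let G = (V,E) be a locally finite simple graph with countable vertex set and let p ∈ [0,1]^V satisfy p_v < 1 for all v ∈ V and Ξ_{G[U]}(p) > 0 for every finite U ⊆ V. Let Y be a BRF in the weak dependency class C_w^G(p), let X be distributed as the Bernoulli product field π_q with q := 1 − p, independent of Y, and let Z := X ∧ Y be the coordinatewise minimum. Then for every finite W ⊆ V, every v ∈ V ∖ W and every s ∈ {0,1}^W one has P(Z_W = s) > 0 and P(Z_v = 1 ∣ Z_W = s) ≥ q_v · Ξ_{G[W∪{v}]}(p) / Ξ_{G[W]}(p). -/

import Mathlib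

open MeasureTheory Finset
open scoped Classical

/-- The critical function Ξ_{G[W]}(p). -/
noncomputable def Xi {V : Type*} (G : SimpleGraph V) (W : Finset V) (p : V → ℝ) : ℝ :=
  ∑ T ∈ W.powerset,
    if ∀ u ∈ T, ∀ w ∈ T, ¬ G.Adj u w then ∏ v ∈ T, -(1 - p v) else 0

/-- Cylinder event. -/
def cylEvt {V : Type*} (S : Finset V) (s : V → Bool) : Set (V → Bool) :=
  {ω | ∀ v ∈ S, ω v = s v}

def WeakDep {V : Type*} (G : SimpleGraph V) (p : V → ℝ)
    (μ : Measure (V → Bool)) : Prop :=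
  IsProbabilityMeasure μ ∧
  ∀ (v : V) (S : Finset V), (∀ w ∈ S, w ≠ v ∧ ¬ G.Adj v w) →
    ∀ s : V → Bool, 0 < (μ (cylEvt S s)).toReal →
      p v ≤ (μ ({ω | ω v = true} ∩ cylEvt S s)).toReal / (μ (cylEvt S s)).toReal

def StrongDep {V : Type*} (G : SimpleGraph V) (p : V → ℝ)
    (μ : Measure (V → Bool)) : Prop :=
  IsProbabilityMeasure μ ∧
  (∀ v : V, (μ {ω | ω v = true}).toReal = p v) ∧
  ∀ (S₁ S₂ : Finset V), (∀ u ∈ S₁, ∀ w ∈ S₂, u ≠ w ∧ ¬ G.Adj u w) →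
    ∀ s₁ s₂ : V → Bool,
      μ (cylEvt S₁ s₁ ∩ cylEvt S₂ s₂) = μ (cylEvt S₁ s₁) * μ (cylEvt S₂ s₂)

/-- Expectation of f under product field π_c restricted to W. -/
noncomputable def prodExp {V : Type*} (c : V → ℝ) (W : Finset V)
    (f : (W → Bool) → ℝ) : ℝ :=
  ∑ s : W → Bool, (∏ v : W, if s v then c v.1 else 1 - c v.1) * f s

/-- μ stochastically dominates the Bernoulli product field π_c. -/
def DomProd {V : Type*} (μ : Measure (V → Bool)) (c : V → ℝ) : Prop :=
  ∀ (W : Finset V) (f : (W → Bool) → ℝ), Monotone f →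
    prodExp c W f ≤ ∫ ω, f (fun v => ω v.1) ∂μ

/-- ν is the Bernoulli product field π_c. -/
def IsProduct {V : Type*} (c : V → ℝ) (μ : Measure (V → Bool)) : Prop :=
  IsProbabilityMeasure μ ∧
  ∀ (S : Finset V) (s : V → Bool),
    μ (cylEvt S s) = ∏ v ∈ S, ENNReal.ofReal (if s v then c v else 1 - c v)

/-- μ is Shearer's measure μ_{G,p}. -/
def IsShearer {V : Type*} [Fintype V] (G : SimpleGraph V) (p : V → ℝ)
    (μ : Measure (V → Bool)) : Prop :=
  IsProbabilityMeasure μ ∧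
  ∀ W : Finset V,
    (μ {ω | ∀ v, (ω v = false ↔ v ∈ W)}).toReal =
      ∑ T ∈ (Finset.univ : Finset V).powerset,
        if W ⊆ T ∧ ∀ u ∈ T, ∀ w ∈ T, ¬ G.Adj u w
        then (-1 : ℝ) ^ (T.card - W.card) * ∏ v ∈ T, (1 - p v) else 0

/-- The law of the coordinatewise minimum of two independent BRFs with laws ν, μ. -/
noncomputable def minLaw {V : Type*} (ν μ : Measure (V → Bool)) : Measure (V → Bool) :=
  Measure.map (fun ω : (V → Bool) × (V → Bool) => fun v => ω.1 v && ω.2 v) (ν.prod μ)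

section XiPart
variable {V : Type*} {G : SimpleGraph V} {p : V → ℝ}

lemma Xi_empty : Xi G ∅ p = 1 := by simp [Xi]

lemma Xi_insert {v : V} {U : Finset V} (hv : v ∉ U) :
    Xi G (insert v U) p =
      Xi G U p - (1 - p v) * Xi G (U.filter fun u => ¬ G.Adj v u) p := by
  classical
  unfold Xi
  rw [Finset.sum_powerset_insert hv]
  have key : ∀ T ∈ U.powerset,
      (if ∀ u ∈ insert v T, ∀ w ∈ insert v T, ¬ G.Adj u w
        then ∏ u ∈ insert v T, -(1 - p u) else 0)
      = -(1 - p v) * (if T ⊆ U.filter (fun u => ¬ G.Adj v u) ∧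
          (∀ u ∈ T, ∀ w ∈ T, ¬ G.Adj u w) then ∏ u ∈ T, -(1 - p u) else 0) := by
    intro T hT
    rw [Finset.mem_powerset] at hT
    have hvT : v ∉ T := fun h => hv (hT h)
    have hiff : (∀ u ∈ insert v T, ∀ w ∈ insert v T, ¬ G.Adj u w) ↔
        (T ⊆ U.filter (fun u => ¬ G.Adj v u) ∧ (∀ u ∈ T, ∀ w ∈ T, ¬ G.Adj u w)) := by
      constructor
      · intro h
        refine ⟨fun u hu => ?_, fun u hu w hw => h u (mem_insert_of_mem hu) w (mem_insert_of_mem hw)⟩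
        rw [Finset.mem_filter]
        exact ⟨hT hu, h v (mem_insert_self _ _) u (mem_insert_of_mem hu)⟩
      · rintro ⟨hsub, hind⟩ u hu w hw
        simp only [Finset.mem_insert] at hu hw
        rcases hu with rfl | hu <;> rcases hw with rfl | hw
        · exact G.loopless.irrefl _
        · exact (Finset.mem_filter.1 (hsub hw)).2
        · exact fun hadj => (Finset.mem_filter.1 (hsub hu)).2 hadj.symm
        · exact hind u hu w hw
    rw [if_congr hiff rfl rfl]
    split_ifs with h
    · rw [Finset.prod_insert hvT]
    · ring
  rw [Finset.sum_congr rfl key, ← Finset.mul_sum]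
  have hps : U.powerset.filter (fun T => T ⊆ U.filter (fun u => ¬ G.Adj v u)) =
      (U.filter (fun u => ¬ G.Adj v u)).powerset := by
    ext T
    simp only [Finset.mem_filter, Finset.mem_powerset]
    exact ⟨fun h => h.2, fun h => ⟨h.trans (Finset.filter_subset _ _), h⟩⟩
  have : ∑ T ∈ U.powerset, (if T ⊆ U.filter (fun u => ¬ G.Adj v u) ∧
          (∀ u ∈ T, ∀ w ∈ T, ¬ G.Adj u w) then ∏ u ∈ T, -(1 - p u) else 0)
      = ∑ T ∈ (U.filter (fun u => ¬ G.Adj v u)).powerset,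
          (if ∀ u ∈ T, ∀ w ∈ T, ¬ G.Adj u w then ∏ u ∈ T, -(1 - p u) else 0) := by
    rw [← hps, Finset.sum_filter]
    refine Finset.sum_congr rfl fun T hT => ?_
    split_ifs <;> first | rfl | tauto
  rw [this]; ring

lemma Xi_singleton (v : V) : Xi G {v} p = p v := by
  have h := Xi_insert (G := G) (p := p) (v := v) (U := ∅) (Finset.notMem_empty v)
  simp only [insert_empty_eq] at h
  rw [h]
  simp [Xi_empty, Finset.filter_empty]

section
variable (hp1 : ∀ v, p v < 1) (hint : ∀ U : Finset V, 0 < Xi G U p)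
include hp1 hint

omit hp1 in
lemma p_pos (v : V) : 0 < p v := by
  have := hint {v}; rwa [Xi_singleton] at this

lemma Xi_insert_le (v : V) (U : Finset V) : Xi G (insert v U) p ≤ Xi G U p := by
  by_cases hv : v ∈ U
  · rw [Finset.insert_eq_self.2 hv]
  · rw [Xi_insert hv]
    nlinarith [hint (U.filter fun u => ¬ G.Adj v u), hp1 v]

lemma Xi_mono : ∀ (U : Finset V) (W : Finset V), W ⊆ U → Xi G U p ≤ Xi G W p := by
  intro U
  induction U using Finset.strongInduction with
  | _ U ih =>
    intro W hW
    by_cases hEq : W = U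
    · rw [hEq]
    · obtain ⟨v, hvU, hvW⟩ : ∃ v ∈ U, v ∉ W := by
        by_contra h; push_neg at h; exact hEq (Finset.Subset.antisymm hW (fun x hx => h x hx))
      calc Xi G U p = Xi G (insert v (U.erase v)) p := by rw [Finset.insert_erase hvU]
        _ ≤ Xi G (U.erase v) p := Xi_insert_le hp1 hint v _
        _ ≤ Xi G W p := ih (U.erase v) (Finset.erase_ssubset hvU)
            W (fun x hx => Finset.mem_erase.2 ⟨fun he => hvW (he ▸ hx), hW hx⟩)

end

end XiPart
section CylPart
variable {V : Type*}

/-- indicator pattern of a finset -/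
noncomputable def ind (T : Finset V) : V → Bool := fun u => decide (u ∈ T)

lemma ind_mem {T : Finset V} {u : V} (h : u ∈ T) : ind T u = true := by simp [ind, h]
lemma ind_not_mem {T : Finset V} {u : V} (h : u ∉ T) : ind T u = false := by simp [ind, h]

lemma measurableSet_coordVal (v : V) (b : Bool) : MeasurableSet {ω : V → Bool | ω v = b} := by
  have h : {ω : V → Bool | ω v = b} = (fun ω : V → Bool => ω v) ⁻¹' {b} := rfl
  rw [h]; exact (measurable_pi_apply v) (measurableSet_singleton b)

lemma measurableSet_cylEvt (S : Finset V) (s : V → Bool) : MeasurableSet (cylEvt S s) := by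
  have : cylEvt S s = ⋂ v ∈ (S : Set V), {ω : V → Bool | ω v = s v} := by
    ext ω; simp [cylEvt]
  rw [this]
  exact MeasurableSet.biInter S.countable_toSet (fun v _ => measurableSet_coordVal v (s v))

lemma measurableSet_coordTrue (v : V) : MeasurableSet {ω : V → Bool | ω v = true} :=
  measurableSet_coordVal v true

lemma cylEvt_empty (s : V → Bool) : cylEvt (∅ : Finset V) s = Set.univ := by
  ext ω; simp [cylEvt]

lemma cylEvt_insert (v : V) (S : Finset V) (s : V → Bool) :
    cylEvt (insert v S) s = {ω | ω v = s v} ∩ cylEvt S s := by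
  ext ω
  simp only [cylEvt, Set.mem_inter_iff, Set.mem_setOf_eq, Finset.mem_insert]
  constructor
  · intro h; exact ⟨h v (Or.inl rfl), fun u hu => h u (Or.inr hu)⟩
  · rintro ⟨h1, h2⟩ u (rfl | hu)
    · exact h1
    · exact h2 u hu

lemma cylEvt_congr {S : Finset V} {s s' : V → Bool} (h : ∀ u ∈ S, s u = s' u) :
    cylEvt S s = cylEvt S s' := by
  ext ω
  constructor <;> intro hω u hu
  · rw [hω u hu, h u hu]
  · rw [hω u hu, ← h u hu]

section Meas
variable (μ : Measure (V → Bool)) [IsProbabilityMeasure μ]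

lemma meas_split (v : V) (C : Set (V → Bool)) (hC : MeasurableSet C) :
    (μ C).toReal = (μ ({ω | ω v = true} ∩ C)).toReal + (μ ({ω | ω v = false} ∩ C)).toReal := by
  have hd : Disjoint ({ω : V → Bool | ω v = true} ∩ C) ({ω | ω v = false} ∩ C) := by
    rw [Set.disjoint_left]; rintro ω ⟨h1, -⟩ ⟨h2, -⟩; simp_all
  have hu : ({ω : V → Bool | ω v = true} ∩ C) ∪ ({ω | ω v = false} ∩ C) = C := by
    ext ω; cases h : ω v <;> simp [h]
  have hmf : MeasurableSet ({ω : V → Bool | ω v = false} ∩ C) :=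
    (measurableSet_coordVal v false).inter hC
  have hadd := measure_union (μ := μ) hd hmf
  rw [hu] at hadd
  rw [hadd, ENNReal.toReal_add (measure_ne_top _ _) (measure_ne_top _ _)]

lemma meas_ie (v w : V) (C : Set (V → Bool)) (hC : MeasurableSet C) :
    (μ ({ω | ω v = true} ∩ C)).toReal + (μ ({ω | ω w = true} ∩ C)).toReal - (μ C).toReal ≤
      (μ ({ω | ω v = true} ∩ ({ω | ω w = true} ∩ C))).toReal := by
  have h1 := meas_split μ w C hC
  have h2 := meas_split μ w ({ω | ω v = true} ∩ C) ((measurableSet_coordTrue v).inter hC)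
  have h3 : ({ω : V → Bool | ω w = true} ∩ ({ω | ω v = true} ∩ C)) =
      ({ω : V → Bool | ω v = true} ∩ ({ω | ω w = true} ∩ C)) := by
    rw [Set.inter_left_comm]
  have h4 : (μ ({ω : V → Bool | ω w = false} ∩ ({ω | ω v = true} ∩ C))).toReal ≤
      (μ ({ω : V → Bool | ω w = false} ∩ C)).toReal := by
    apply ENNReal.toReal_mono (measure_ne_top _ _)
    exact measure_mono (Set.inter_subset_inter_right _ Set.inter_subset_right)
  rw [h3] at h2
  linarith

end Meas

end CylPart
section RRPart
variable {V : Type*}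

lemma ind_eq_ind {T T' : Finset V} {u : V} (h : u ∈ T ↔ u ∈ T') : ind T u = ind T' u := by
  simp only [ind]; exact decide_eq_decide.2 h

/-- The fundamental quantity: `RR A B = Σ_{t ⊆ B} (Π_{b∈t} p b) μ(cyl)`. -/
noncomputable def RR (μ : Measure (V → Bool)) (p : V → ℝ) (A B : Finset V) : ℝ :=
  ∑ t ∈ B.powerset, (∏ b ∈ t, p b) * (μ (cylEvt (A ∪ B) (ind (A ∪ t)))).toReal

variable (μ : Measure (V → Bool)) (p : V → ℝ)

lemma cyl_ins {v : V} {A B t : Finset V} (hv : v ∉ A ∪ B) (ht : t ⊆ B) :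
    cylEvt (insert v A ∪ B) (ind (insert v A ∪ t)) =
      {ω | ω v = true} ∩ cylEvt (A ∪ B) (ind (A ∪ t)) := by
  rw [Finset.insert_union, cylEvt_insert]
  have h1 : ind (insert v A ∪ t) v = true := ind_mem (by simp)
  rw [h1]
  congr 1
  refine cylEvt_congr fun u hu => ind_eq_ind ?_
  have hne : u ≠ v := fun h => hv (h ▸ hu)
  simp [Finset.mem_union, Finset.mem_insert, hne]

lemma RR_insert {v : V} {A B : Finset V} (hv : v ∉ A ∪ B) :
    RR μ p (insert v A) B = ∑ t ∈ B.powerset, (∏ b ∈ t, p b) *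
      (μ ({ω | ω v = true} ∩ cylEvt (A ∪ B) (ind (A ∪ t)))).toReal := by
  refine Finset.sum_congr rfl fun t ht => ?_
  rw [cyl_ins hv (Finset.mem_powerset.1 ht)]

section Prob
variable [IsProbabilityMeasure μ] (hp0 : ∀ v, 0 ≤ p v)
include hp0

lemma RR_nonneg (A B : Finset V) : 0 ≤ RR μ p A B :=
  Finset.sum_nonneg fun t _ => mul_nonneg (Finset.prod_nonneg fun b _ => hp0 b)
    ENNReal.toReal_nonneg

omit hp0 in
lemma RR_empty : RR μ p ∅ ∅ = 1 := by
  simp [RR, cylEvt_empty, Finset.powerset_empty]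

lemma RR_insert_le {v : V} {A B : Finset V} (hv : v ∉ A ∪ B) :
    RR μ p (insert v A) B ≤ RR μ p A B := by
  rw [RR_insert μ p hv]
  refine Finset.sum_le_sum fun t ht => ?_
  refine mul_le_mul_of_nonneg_left ?_ (Finset.prod_nonneg fun b _ => hp0 b)
  exact ENNReal.toReal_mono (measure_ne_top _ _) (measure_mono Set.inter_subset_right)

/-- Inclusion-exclusion inequality. -/
lemma RR_ie {v w : V} {A B : Finset V} (hv : v ∉ A ∪ B) (hw : w ∉ A ∪ B) (hvw : v ≠ w) :
    RR μ p (insert v A) B + RR μ p (insert w A) B - RR μ p A B ≤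
      RR μ p (insert v (insert w A)) B := by
  have hv' : v ∉ insert w A ∪ B := by
    simp only [Finset.mem_union, Finset.mem_insert] at hv ⊢; tauto
  rw [RR_insert μ p hv, RR_insert μ p hw, RR_insert μ p hv']
  have hrw : ∀ t ∈ B.powerset, (∏ b ∈ t, p b) *
      (μ ({ω | ω v = true} ∩ cylEvt (insert w A ∪ B) (ind (insert w A ∪ t)))).toReal
      = (∏ b ∈ t, p b) * (μ ({ω | ω v = true} ∩
          ({ω | ω w = true} ∩ cylEvt (A ∪ B) (ind (A ∪ t))))).toReal := by
    intro t ht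
    rw [cyl_ins hw (Finset.mem_powerset.1 ht)]
  rw [Finset.sum_congr rfl hrw]
  unfold RR
  rw [← Finset.sum_add_distrib, ← Finset.sum_sub_distrib]
  refine Finset.sum_le_sum fun t ht => ?_
  have hie := meas_ie μ v w (cylEvt (A ∪ B) (ind (A ∪ t))) (measurableSet_cylEvt _ _)
  have hpr : (0:ℝ) ≤ ∏ b ∈ t, p b := Finset.prod_nonneg fun b _ => hp0 b
  nlinarith [mul_le_mul_of_nonneg_left hie hpr]

omit hp0 in
/-- Peeling a vertex of `B`. -/
lemma RR_erase {w : V} {A B : Finset V} (hwB : w ∈ B) (hwA : w ∉ A) :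
    RR μ p A B = RR μ p A (B.erase w) - (1 - p w) * RR μ p (insert w A) (B.erase w) := by
  classical
  set B' := B.erase w with hB'
  have hwB' : w ∉ B' := Finset.notMem_erase w B
  have hwAB' : w ∉ A ∪ B' := by simp [hwA, hwB']
  have hins : insert w B' = B := Finset.insert_erase hwB
  rw [RR_insert μ p hwAB']
  unfold RR
  rw [← hins, Finset.sum_powerset_insert hwB']
  have h1 : ∀ t ∈ B'.powerset, (∏ b ∈ t, p b) *
      (μ (cylEvt (A ∪ insert w B') (ind (A ∪ t)))).toReal
      = (∏ b ∈ t, p b) * ((μ (cylEvt (A ∪ B') (ind (A ∪ t)))).toReal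
          - (μ ({ω | ω w = true} ∩ cylEvt (A ∪ B') (ind (A ∪ t)))).toReal) := by
    intro t ht
    have hwt : w ∉ t := fun h => hwB' (Finset.mem_powerset.1 ht h)
    have hset : cylEvt (A ∪ insert w B') (ind (A ∪ t)) =
        {ω | ω w = ind (A ∪ t) w} ∩ cylEvt (A ∪ B') (ind (A ∪ t)) := by
      rw [Finset.union_insert, cylEvt_insert]
    have hf : ind (A ∪ t) w = false := ind_not_mem (by simp [hwA, hwt])
    rw [hset, hf]
    have hsp := meas_split μ w (cylEvt (A ∪ B') (ind (A ∪ t))) (measurableSet_cylEvt _ _)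
    have : (μ ({ω : V → Bool | ω w = false} ∩ cylEvt (A ∪ B') (ind (A ∪ t)))).toReal
        = (μ (cylEvt (A ∪ B') (ind (A ∪ t)))).toReal
          - (μ ({ω | ω w = true} ∩ cylEvt (A ∪ B') (ind (A ∪ t)))).toReal := by linarith
    rw [this]
  have h2 : ∀ t ∈ B'.powerset, (∏ b ∈ insert w t, p b) *
      (μ (cylEvt (A ∪ insert w B') (ind (A ∪ insert w t)))).toReal
      = (p w * ∏ b ∈ t, p b) *
          (μ ({ω | ω w = true} ∩ cylEvt (A ∪ B') (ind (A ∪ t)))).toReal := by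
    intro t ht
    have hwt : w ∉ t := fun h => hwB' (Finset.mem_powerset.1 ht h)
    rw [Finset.prod_insert hwt]
    have hset : cylEvt (A ∪ insert w B') (ind (A ∪ insert w t)) =
        {ω | ω w = true} ∩ cylEvt (A ∪ B') (ind (A ∪ insert w t)) := by
      rw [Finset.union_insert, cylEvt_insert, ind_mem (by simp : w ∈ A ∪ insert w t)]
    have hcg : cylEvt (A ∪ B') (ind (A ∪ insert w t)) = cylEvt (A ∪ B') (ind (A ∪ t)) := by
      refine cylEvt_congr fun u hu => ind_eq_ind ?_
      have hne : u ≠ w := fun h => hwAB' (h ▸ hu)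
      simp [Finset.mem_union, Finset.mem_insert, hne]
    rw [hset, hcg]
  rw [Finset.sum_congr rfl h1, Finset.sum_congr rfl h2, Finset.mul_sum,
    ← Finset.sum_sub_distrib, ← Finset.sum_add_distrib]
  exact Finset.sum_congr rfl fun t ht => by ring

/-- Weak dependency bound. -/
lemma RR_weak {G : SimpleGraph V} (hY : WeakDep G p μ) {v : V} {A B : Finset V}
    (hN : ∀ u ∈ A ∪ B, u ≠ v ∧ ¬ G.Adj v u) (hv : v ∉ A ∪ B) :
    p v * RR μ p A B ≤ RR μ p (insert v A) B := by
  rw [RR_insert μ p hv]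
  unfold RR
  rw [Finset.mul_sum]
  refine Finset.sum_le_sum fun t ht => ?_
  set C := cylEvt (A ∪ B) (ind (A ∪ t)) with hC
  have key : p v * (μ C).toReal ≤ (μ ({ω | ω v = true} ∩ C)).toReal := by
    rcases lt_or_ge 0 (μ C).toReal with hpos | hle
    · have hb := hY.2 v (A ∪ B) hN (ind (A ∪ t)) hpos
      rw [le_div_iff₀ hpos] at hb
      linarith
    · have h0 : (μ C).toReal = 0 := le_antisymm hle ENNReal.toReal_nonneg
      rw [h0, mul_zero]
      exact ENNReal.toReal_nonneg
  have hpr : (0:ℝ) ≤ ∏ b ∈ t, p b := Finset.prod_nonneg fun b _ => hp0 b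
  calc p v * ((∏ b ∈ t, p b) * (μ C).toReal) = (∏ b ∈ t, p b) * (p v * (μ C).toReal) := by ring
    _ ≤ (∏ b ∈ t, p b) * (μ ({ω | ω v = true} ∩ C)).toReal :=
        mul_le_mul_of_nonneg_left key hpr

end Prob
end RRPart
section MainPart
variable {V : Type*} {G : SimpleGraph V} {p : V → ℝ} {μ : Measure (V → Bool)}
  [IsProbabilityMeasure μ]

lemma main_induction (hp1 : ∀ v, p v < 1) (hint : ∀ U : Finset V, 0 < Xi G U p)
    (hY : WeakDep G p μ) :
    ∀ (n : ℕ) (A B : Finset V), Disjoint A B → (A ∪ B).card = n →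
      0 < RR μ p A B ∧
      ∀ v ∉ A ∪ B, Xi G (insert v (A ∪ B)) p / Xi G (A ∪ B) p * RR μ p A B ≤
        RR μ p (insert v A) B := by
  classical
  have hp0 : ∀ v, 0 ≤ p v := fun v => (p_pos hint v).le
  intro n
  induction n using Nat.strong_induction_on with
  | _ n ih =>
  intro A B hdisj hcard
  -- ============ Part 1 : positivity ============
  have part1 : 0 < RR μ p A B := by
    by_cases hA : A.Nonempty
    · obtain ⟨w, hwA⟩ := hA
      set A' := A.erase w with hA'def
      have hwA' : w ∉ A' := Finset.notMem_erase w A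
      have hwB : w ∉ B := Finset.disjoint_left.1 hdisj hwA
      have hwU' : w ∉ A' ∪ B := by simp [hwA', hwB]
      have hUins : A ∪ B = insert w (A' ∪ B) := by
        rw [← Finset.insert_erase hwA, Finset.insert_union]
      have hlt : (A' ∪ B).card < n := by
        rw [← hcard, hUins, Finset.card_insert_of_notMem hwU']; omega
      have hdisj' : Disjoint A' B := Finset.disjoint_of_subset_left (Finset.erase_subset w A) hdisj
      obtain ⟨hpos', hineq'⟩ := ih _ hlt A' B hdisj' rfl
      have h2 := hineq' w hwU'
      rw [Finset.insert_erase hwA, ← hUins] at h2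
      have hρ : 0 < Xi G (A ∪ B) p / Xi G (A' ∪ B) p := div_pos (hint _) (hint _)
      linarith [mul_pos hρ hpos']
    · by_cases hB : B.Nonempty
      · obtain ⟨w, hwB⟩ := hB
        set B' := B.erase w with hB'def
        have hwB' : w ∉ B' := Finset.notMem_erase w B
        have hwA : w ∉ A := Finset.disjoint_right.1 hdisj hwB
        have hwU' : w ∉ A ∪ B' := by simp [hwA, hwB']
        have hUins : A ∪ B = insert w (A ∪ B') := by
          rw [← Finset.insert_erase hwB, Finset.union_insert]
        have hlt : (A ∪ B').card < n := by
          rw [← hcard, hUins, Finset.card_insert_of_notMem hwU']; omega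
        have hdisj' : Disjoint A B' :=
          Finset.disjoint_of_subset_right (Finset.erase_subset w B) hdisj
        obtain ⟨hpos', _⟩ := ih _ hlt A B' hdisj' rfl
        have hera := RR_erase μ p hwB hwA
        have hmono := RR_insert_le μ p hp0 hwU'
        have hq0 : 0 ≤ 1 - p w := by linarith [hp1 w]
        have hpw : 0 < p w := p_pos hint w
        rw [← hB'def] at hera
        nlinarith
      · rw [Finset.not_nonempty_iff_eq_empty] at hA hB
        subst hA; subst hB
        rw [RR_empty]; norm_num
  refine ⟨part1, ?_⟩
  -- ============ Part 2 : the conditional bound ============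
  intro v hv
  by_cases hDA : ∃ w ∈ A, G.Adj v w
  · -- remove a neighbour of v from A
    obtain ⟨w, hwA, hadj⟩ := hDA
    set A' := A.erase w with hA'def
    have hwA' : w ∉ A' := Finset.notMem_erase w A
    have hwB : w ∉ B := Finset.disjoint_left.1 hdisj hwA
    have hwU' : w ∉ A' ∪ B := by simp [hwA', hwB]
    have hAins : A = insert w A' := (Finset.insert_erase hwA).symm
    have hUins : A ∪ B = insert w (A' ∪ B) := by rw [hAins, Finset.insert_union]
    have hvU' : v ∉ A' ∪ B := by
      intro h; exact hv (by rw [hUins]; exact Finset.mem_insert_of_mem h)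
    have hvw : v ≠ w := by rintro rfl; exact (G.loopless.irrefl v) hadj
    have hlt : (A' ∪ B).card < n := by
      rw [← hcard, hUins, Finset.card_insert_of_notMem hwU']; omega
    have hdisj' : Disjoint A' B := Finset.disjoint_of_subset_left (Finset.erase_subset w A) hdisj
    obtain ⟨hr, hineq'⟩ := ih _ hlt A' B hdisj' rfl
    have hIHv := hineq' v hvU'
    have hIHw := hineq' w hwU'
    rw [← hUins, ← hAins] at hIHw
    have hie := RR_ie μ p hp0 hvU' hwU' hvw
    rw [← hAins] at hie
    -- Xi bookkeeping
    set x := Xi G (A ∪ B) p with hx_def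
    set x' := Xi G (A' ∪ B) p with hx'_def
    set xv := Xi G (insert v (A ∪ B)) p with hxv_def
    set xv' := Xi G (insert v (A' ∪ B)) p with hxv'_def
    have hx : 0 < x := hint _
    have hx' : 0 < x' := hint _
    have hvU : v ∉ A ∪ B := hv
    have hfilter : (A ∪ B).filter (fun u => ¬ G.Adj v u) =
        (A' ∪ B).filter (fun u => ¬ G.Adj v u) := by
      rw [hUins, Finset.filter_insert, if_neg (by simpa using hadj)]
    have hkey : x - xv = x' - xv' := by
      rw [hxv_def, hxv'_def, Xi_insert hvU, Xi_insert hvU', hfilter]; ring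
    have hxvle : xv ≤ x := Xi_insert_le hp1 hint v _
    have hxv'le : xv' ≤ x' := Xi_insert_le hp1 hint v _
    -- clear denominators
    rw [div_mul_eq_mul_div, div_le_iff₀ hx]
    rw [div_mul_eq_mul_div, div_le_iff₀ hx'] at hIHv hIHw
    have hxv'eq : xv' = x' - x + xv := by linarith
    rw [hxv'eq] at hIHv
    rw [← mul_le_mul_iff_of_pos_right hx']
    nlinarith [mul_le_mul_of_nonneg_right hie (mul_pos hx hx').le,
      mul_le_mul_of_nonneg_right hIHv hx.le,
      mul_nonneg (sub_nonneg.2 hxvle) (sub_nonneg.2 hIHw)]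
  · by_cases hDB : ∃ w ∈ B, G.Adj v w
    · -- remove a neighbour of v from B
      obtain ⟨w, hwB, hadj⟩ := hDB
      set B' := B.erase w with hB'def
      have hwB' : w ∉ B' := Finset.notMem_erase w B
      have hwA : w ∉ A := Finset.disjoint_right.1 hdisj hwB
      have hwU' : w ∉ A ∪ B' := by simp [hwA, hwB']
      have hBins : B = insert w B' := (Finset.insert_erase hwB).symm
      have hUins : A ∪ B = insert w (A ∪ B') := by rw [hBins, Finset.union_insert]
      have hvU' : v ∉ A ∪ B' := by
        intro h; exact hv (by rw [hUins]; exact Finset.mem_insert_of_mem h)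
      have hvw : v ≠ w := by rintro rfl; exact (G.loopless.irrefl v) hadj
      have hlt : (A ∪ B').card < n := by
        rw [← hcard, hUins, Finset.card_insert_of_notMem hwU']; omega
      have hdisj' : Disjoint A B' :=
        Finset.disjoint_of_subset_right (Finset.erase_subset w B) hdisj
      obtain ⟨hr, hineq'⟩ := ih _ hlt A B' hdisj' rfl
      have hIHv := hineq' v hvU'
      -- the two peeling identities
      have hera := RR_erase μ p hwB hwA
      have hwvA : w ∉ insert v A := by
        simp only [Finset.mem_insert]
        rintro (rfl | h)
        · exact hvw rfl
        · exact hwA h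
      have herav := RR_erase μ p hwB hwvA
      rw [← hB'def] at hera herav
      -- monotonicity facts
      have hbb0 : 0 ≤ RR μ p (insert w A) B' :=
        RR_nonneg μ p hp0 _ _
      have hbble : RR μ p (insert w A) B' ≤ RR μ p A B' := RR_insert_le μ p hp0 hwU'
      have hvwA : v ∉ insert w A ∪ B' := by
        simp only [Finset.mem_union, Finset.mem_insert, not_or] at hvU' ⊢
        exact ⟨⟨hvw, hvU'.1⟩, hvU'.2⟩
      have hmono2 : RR μ p (insert w (insert v A)) B' ≤ RR μ p (insert w A) B' := by
        rw [Finset.insert_comm]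
        exact RR_insert_le μ p hp0 hvwA
      -- Xi bookkeeping
      set x := Xi G (A ∪ B) p with hx_def
      set x' := Xi G (A ∪ B') p with hx'_def
      set xv := Xi G (insert v (A ∪ B)) p with hxv_def
      set xv' := Xi G (insert v (A ∪ B')) p with hxv'_def
      set S := Xi G ((A ∪ B').filter (fun u => ¬ G.Adj w u)) p with hS_def
      have hx : 0 < x := hint _
      have hx' : 0 < x' := hint _
      have hS : 0 < S := hint _
      have hxw : x = x' - (1 - p w) * S := by
        rw [hx_def, hUins, Xi_insert hwU']
      have hfilter : ((insert v (A ∪ B')).filter (fun u => ¬ G.Adj w u)) =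
          (A ∪ B').filter (fun u => ¬ G.Adj w u) := by
        rw [Finset.filter_insert, if_neg (by simpa using hadj.symm)]
      have hwvU' : w ∉ insert v (A ∪ B') := by
        simp only [Finset.mem_insert]
        rintro (rfl | h)
        · exact hvw rfl
        · exact hwU' h
      have hxv : xv = xv' - (1 - p w) * S := by
        have h1 : insert v (A ∪ B) = insert w (insert v (A ∪ B')) := by
          rw [hUins, Finset.insert_comm]
        rw [hxv_def, h1, Xi_insert hwvU', hfilter]
      have hxv'le : xv' ≤ x' := Xi_insert_le hp1 hint v _
      have hx'S : x' ≤ S := Xi_mono hp1 hint _ _ (Finset.filter_subset _ _)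
      have hq0 : 0 ≤ 1 - p w := by linarith [hp1 w]
      -- clear denominators and finish
      have hSr : RR μ p (insert w A) B' * x' ≤ S * RR μ p A B' := by
        have := mul_le_mul hbble hx'S hx'.le hr.le
        linarith [this]
      have hxpos : (0:ℝ) < x' - (1 - p w) * S := by rw [← hxw]; exact hx
      rw [div_mul_eq_mul_div, div_le_iff₀ hx]
      rw [div_mul_eq_mul_div, div_le_iff₀ hx'] at hIHv
      rw [hera, herav, hxw, hxv]
      rw [← mul_le_mul_iff_of_pos_right hx']
      nlinarith [mul_nonneg (mul_nonneg hq0 (sub_nonneg.2 hmono2))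
          (mul_nonneg hxpos.le hx'.le),
        mul_le_mul_of_nonneg_right hIHv hxpos.le,
        mul_nonneg (mul_nonneg hq0 (sub_nonneg.2 hxv'le)) (sub_nonneg.2 hSr)]
    · -- no neighbour of v in A ∪ B : use weak dependency directly
      push_neg at hDA hDB
      have hN : ∀ u ∈ A ∪ B, u ≠ v ∧ ¬ G.Adj v u := by
        intro u hu
        refine ⟨fun h => hv (h ▸ hu), ?_⟩
        rcases Finset.mem_union.1 hu with h | h
        · exact hDA u h
        · exact hDB u h
      have hweak := RR_weak μ p hp0 hY hN hv
      have hfilter : (A ∪ B).filter (fun u => ¬ G.Adj v u) = A ∪ B :=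
        Finset.filter_true_of_mem fun u hu => (hN u hu).2
      have hxv : Xi G (insert v (A ∪ B)) p = p v * Xi G (A ∪ B) p := by
        rw [Xi_insert hv, hfilter]; ring
      rw [hxv, mul_div_assoc, div_self (ne_of_gt (hint _)), mul_one]
      exact hweak
end MainPart
section FinalPart
variable {V : Type*} [Countable V] {p : V → ℝ}

lemma measurable_min_map :
    Measurable (fun ω : (V → Bool) × (V → Bool) => fun v => ω.1 v && ω.2 v) := by
  refine measurable_pi_lambda _ fun v => ?_
  have h1 : Measurable fun ω : (V → Bool) × (V → Bool) => (ω.1 v, ω.2 v) :=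
    ((measurable_pi_apply v).comp measurable_fst).prodMk
      ((measurable_pi_apply v).comp measurable_snd)
  exact (measurable_of_countable (fun q : Bool × Bool => q.1 && q.2)).comp h1

variable {ν μ : Measure (V → Bool)}

lemma prod_decomp (hp0 : ∀ v, 0 ≤ p v) (hp1 : ∀ v, p v ≤ 1)
    (hX : IsProduct (fun v => 1 - p v) ν) [IsProbabilityMeasure μ]
    (W : Finset V) (s : V → Bool) :
    ((ν.prod μ) ((fun ω : (V → Bool) × (V → Bool) => fun u => ω.1 u && ω.2 u) ⁻¹'
        cylEvt W s)).toReal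
      = (∏ a ∈ W.filter (fun w => s w = true), (1 - p a)) *
          RR μ p (W.filter (fun w => s w = true)) (W.filter (fun w => s w = false)) := by
  classical
  haveI := hX.1
  set A := W.filter (fun w => s w = true) with hAdef
  set B := W.filter (fun w => s w = false) with hBdef
  have hAB : A ∪ B = W := by
    ext u
    simp only [hAdef, hBdef, Finset.mem_union, Finset.mem_filter]
    cases h : s u <;> simp [h] <;> tauto
  have hsA : ∀ u ∈ A, s u = true := by
    intro u hu; rw [hAdef, Finset.mem_filter] at hu; exact hu.2
  have hsB : ∀ u ∈ B, s u = false := by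
    intro u hu; rw [hBdef, Finset.mem_filter] at hu; exact hu.2
  have hdisjAB : Disjoint A B := by
    rw [Finset.disjoint_left]
    intro u hu1 hu2
    rw [hAdef, Finset.mem_filter] at hu1
    rw [hBdef, Finset.mem_filter] at hu2
    rw [hu1.2] at hu2
    exact absurd hu2.2 (by simp)
  -- the disjoint rectangle decomposition
  have hdecomp : (fun ω : (V → Bool) × (V → Bool) => fun u => ω.1 u && ω.2 u) ⁻¹'
      cylEvt W s = ⋃ t ∈ B.powerset, (cylEvt (A ∪ t) (ind A)) ×ˢ (cylEvt W (ind (A ∪ t))) := by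
    ext ⟨x, y⟩
    simp only [Set.mem_preimage, Set.mem_iUnion, Set.mem_prod, Finset.mem_powerset, cylEvt,
      Set.mem_setOf_eq]
    constructor
    · intro h
      refine ⟨B.filter (fun b => y b = true), Finset.filter_subset _ _, fun u hu => ?_,
        fun u hu => ?_⟩
      · rcases Finset.mem_union.1 hu with huA | huT
        · have hsu : s u = true := hsA u huA
          have := h u (hAB ▸ Finset.mem_union_left B huA)
          rw [hsu] at this
          rw [ind_mem huA]
          rw [Bool.and_eq_true] at this
          exact this.1
        · have huB := Finset.mem_filter.1 huT
          have hsu : s u = false := hsB u huB.1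
          have hyu : y u = true := huB.2
          have := h u (hAB ▸ Finset.mem_union_right A huB.1)
          rw [hsu] at this
          have hxA : u ∉ A := Finset.disjoint_right.1 hdisjAB huB.1
          rw [ind_not_mem hxA]
          cases hxu : x u
          · rfl
          · rw [hxu, hyu] at this; exact absurd this (by simp)
      · by_cases huA : u ∈ A
        · have hsu : s u = true := hsA u huA
          have := h u hu
          rw [hsu] at this
          rw [ind_mem (Finset.mem_union_left _ huA)]
          rw [Bool.and_eq_true] at this
          exact this.2
        · have huB : u ∈ B := by
            have := hAB ▸ hu
            rcases Finset.mem_union.1 ((hAB.symm ▸ hu : u ∈ A ∪ B)) with h' | h'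
            · exact absurd h' huA
            · exact h'
          have hNA : u ∉ A ∪ B.filter (fun b => y b = true) ↔ ¬ (y u = true) := by
            simp [huA, huB]
          cases hyu : y u
          · rw [ind_not_mem (by rw [hNA, hyu]; simp)]
          · rw [ind_mem (Finset.mem_union_right _ (Finset.mem_filter.2 ⟨huB, hyu⟩))]
    · rintro ⟨t, htB, hx, hy⟩ u hu
      by_cases huA : u ∈ A
      · have hsu : s u = true := hsA u huA
        rw [hx u (Finset.mem_union_left _ huA), ind_mem huA,
          hy u hu, ind_mem (Finset.mem_union_left _ huA), hsu]
        rfl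
      · have huB : u ∈ B := by
          rcases Finset.mem_union.1 ((hAB.symm ▸ hu : u ∈ A ∪ B)) with h' | h'
          · exact absurd h' huA
          · exact h'
        have hsu : s u = false := hsB u huB
        rw [hsu, hy u hu]
        by_cases hut : u ∈ t
        · rw [hx u (Finset.mem_union_right _ hut), ind_not_mem huA,
            ind_mem (Finset.mem_union_right _ hut)]
          rfl
        · rw [ind_not_mem (by simp [huA, hut])]
          simp
  rw [hdecomp]
  have hpd : (↑B.powerset : Set (Finset V)).PairwiseDisjoint
      (fun t => (cylEvt (A ∪ t) (ind A)) ×ˢ (cylEvt W (ind (A ∪ t)))) := by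
    intro t1 h1 t2 h2 hne
    rw [Finset.mem_coe, Finset.mem_powerset] at h1 h2
    rw [Function.onFun, Set.disjoint_left]
    rintro ⟨x, y⟩ ⟨-, hy1⟩ ⟨-, hy2⟩
    apply hne
    ext b
    by_cases hbB : b ∈ B
    · constructor
      · intro hb1
        have e1 := hy1 b (hAB ▸ Finset.mem_union_right A hbB)
        have e2 := hy2 b (hAB ▸ Finset.mem_union_right A hbB)
        rw [ind_mem (Finset.mem_union_right _ hb1)] at e1
        rw [e1] at e2
        have := (ind_eq_ind (Iff.rfl)).symm ▸ e2
        rcases Finset.mem_union.1 (by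
          have : ind (A ∪ t2) b = true := e2.symm
          simpa [ind] using this) with h' | h'
        · exact absurd h' (Finset.disjoint_right.1 hdisjAB hbB)
        · exact h'
      · intro hb2
        have e1 := hy1 b (hAB ▸ Finset.mem_union_right A hbB)
        have e2 := hy2 b (hAB ▸ Finset.mem_union_right A hbB)
        rw [ind_mem (Finset.mem_union_right _ hb2)] at e2
        rw [e2] at e1
        rcases Finset.mem_union.1 (by
          have : ind (A ∪ t1) b = true := e1.symm
          simpa [ind] using this) with h' | h'
        · exact absurd h' (Finset.disjoint_right.1 hdisjAB hbB)
        · exact h'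
    · constructor
      · intro hb1; exact absurd (h1 hb1) hbB
      · intro hb2; exact absurd (h2 hb2) hbB
  rw [measure_biUnion_finset hpd (fun t _ =>
    (measurableSet_cylEvt _ _).prod (measurableSet_cylEvt _ _))]
  have hterm : ∀ t ∈ B.powerset,
      (ν.prod μ) ((cylEvt (A ∪ t) (ind A)) ×ˢ (cylEvt W (ind (A ∪ t))))
        = (∏ a ∈ A, ENNReal.ofReal (1 - p a)) * (∏ b ∈ t, ENNReal.ofReal (p b)) *
            μ (cylEvt W (ind (A ∪ t))) := by
    intro t ht
    rw [Finset.mem_powerset] at ht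
    rw [Measure.prod_prod, hX.2 (A ∪ t) (ind A)]
    congr 1
    have hdisjAt : Disjoint A t := Finset.disjoint_of_subset_right ht hdisjAB
    rw [Finset.prod_union hdisjAt]
    congr 1
    · exact Finset.prod_congr rfl fun a ha => by rw [ind_mem ha]; simp
    · refine Finset.prod_congr rfl fun b hb => ?_
      have hbA : b ∉ A := Finset.disjoint_left.1 (hdisjAt.symm) hb
      rw [ind_not_mem hbA]
      norm_num
  rw [Finset.sum_congr rfl hterm]
  have hne : ∀ t ∈ B.powerset,
      (∏ a ∈ A, ENNReal.ofReal (1 - p a)) * (∏ b ∈ t, ENNReal.ofReal (p b)) *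
        μ (cylEvt W (ind (A ∪ t))) ≠ ⊤ := by
    intro t ht
    exact ENNReal.mul_ne_top (ENNReal.mul_ne_top
      (ENNReal.prod_ne_top fun a _ => ENNReal.ofReal_ne_top)
      (ENNReal.prod_ne_top fun b _ => ENNReal.ofReal_ne_top)) (measure_ne_top _ _)
  rw [ENNReal.toReal_sum hne, RR, Finset.mul_sum]
  refine Finset.sum_congr rfl fun t ht => ?_
  rw [ENNReal.toReal_mul, ENNReal.toReal_mul, ENNReal.toReal_prod, ENNReal.toReal_prod]
  have h1 : ∏ a ∈ A, (ENNReal.ofReal (1 - p a)).toReal = ∏ a ∈ A, (1 - p a) :=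
    Finset.prod_congr rfl fun a _ => ENNReal.toReal_ofReal (by linarith [hp1 a])
  have h2 : ∏ b ∈ t, (ENNReal.ofReal (p b)).toReal = ∏ b ∈ t, p b :=
    Finset.prod_congr rfl fun b _ => ENNReal.toReal_ofReal (hp0 b)
  rw [h1, h2, hAB]
  ring
end FinalPart
/-- conditional minorization for Z = X ∧ Y, where Y is in the weak
dependency class and X is an independent π_q product field. -/
theorem stmt16 {V : Type*} [Countable V] (G : SimpleGraph V)
    (hlf : ∀ v : V, (G.neighborSet v).Finite)
    (p : V → ℝ) (hp0 : ∀ v, 0 ≤ p v) (hp1 : ∀ v, p v < 1)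
    (hint : ∀ U : Finset V, 0 < Xi G U p)
    (μ ν : Measure (V → Bool))
    (hY : WeakDep G p μ) (hX : IsProduct (fun v => 1 - p v) ν) :
    ∀ (W : Finset V) (v : V), v ∉ W → ∀ s : V → Bool,
      0 < ((minLaw ν μ) (cylEvt W s)).toReal ∧
      (1 - p v) * (Xi G (insert v W) p / Xi G W p) ≤
        ((minLaw ν μ) ({ω | ω v = true} ∩ cylEvt W s)).toReal /
          ((minLaw ν μ) (cylEvt W s)).toReal := by
  classical
  intro W v hvW s
  haveI hμP : IsProbabilityMeasure μ := hY.1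
  haveI hνP : IsProbabilityMeasure ν := hX.1
  have hp1' : ∀ u, p u ≤ 1 := fun u => (hp1 u).le
  set A := W.filter (fun w => s w = true) with hAdef
  set B := W.filter (fun w => s w = false) with hBdef
  have hAB : A ∪ B = W := by
    ext u
    simp only [hAdef, hBdef, Finset.mem_union, Finset.mem_filter]
    cases h : s u <;> simp [h] <;> tauto
  have hdisjAB : Disjoint A B := by
    rw [Finset.disjoint_left]
    intro u hu1 hu2
    rw [hAdef, Finset.mem_filter] at hu1
    rw [hBdef, Finset.mem_filter] at hu2
    rw [hu1.2] at hu2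
    exact absurd hu2.2 (by simp)
  have hvA : v ∉ A := fun h => hvW (by rw [hAdef] at h; exact Finset.filter_subset _ _ h)
  have hvU : v ∉ A ∪ B := by rw [hAB]; exact hvW
  obtain ⟨hpos, hineq⟩ := main_induction hp1 hint hY ((A ∪ B).card) A B hdisjAB rfl
  have hkey := hineq v hvU
  rw [hAB] at hkey
  have hm := measurable_min_map (V := V)
  have hprodA : (0:ℝ) < ∏ a ∈ A, (1 - p a) :=
    Finset.prod_pos fun a _ => by linarith [hp1 a]
  have hden : ((minLaw ν μ) (cylEvt W s)).toReal = (∏ a ∈ A, (1 - p a)) * RR μ p A B := by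
    rw [minLaw, Measure.map_apply hm (measurableSet_cylEvt W s)]
    exact prod_decomp hp0 hp1' hX W s
  have hsetEq : {ω : V → Bool | ω v = true} ∩ cylEvt W s =
      cylEvt (insert v W) (Function.update s v true) := by
    ext ω
    simp only [cylEvt, Set.mem_inter_iff, Set.mem_setOf_eq, Finset.mem_insert]
    constructor
    · rintro ⟨h1, h2⟩ u (rfl | hu)
      · rw [Function.update_self]; exact h1
      · have hne : u ≠ v := fun h => hvW (h ▸ hu)
        rw [Function.update_of_ne hne]; exact h2 u hu
    · intro h
      refine ⟨?_, fun u hu => ?_⟩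
      · have := h v (Or.inl rfl); rwa [Function.update_self] at this
      · have hne : u ≠ v := fun hh => hvW (hh ▸ hu)
        have := h u (Or.inr hu)
        rwa [Function.update_of_ne hne] at this
  have hfA : (insert v W).filter (fun w => Function.update s v true w = true) = insert v A := by
    ext u
    simp only [Finset.mem_filter, Finset.mem_insert, hAdef]
    by_cases hu : u = v
    · subst hu; simp [Function.update_self]
    · rw [Function.update_of_ne hu]
      tauto
  have hfB : (insert v W).filter (fun w => Function.update s v true w = false) = B := by
    ext u
    simp only [Finset.mem_filter, Finset.mem_insert, hBdef]
    by_cases hu : u = v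
    · subst hu
      simp only [Function.update_self]
      simp [hvW]
    · rw [Function.update_of_ne hu]
      tauto
  have hnum : ((minLaw ν μ) ({ω | ω v = true} ∩ cylEvt W s)).toReal =
      (1 - p v) * ((∏ a ∈ A, (1 - p a)) * RR μ p (insert v A) B) := by
    rw [minLaw, hsetEq, Measure.map_apply hm (measurableSet_cylEvt _ _)]
    have hd := prod_decomp (μ := μ) hp0 hp1' hX (insert v W) (Function.update s v true)
    rw [hfA, hfB] at hd
    rw [hd, Finset.prod_insert hvA]
    ring
  have hdenpos : (0:ℝ) < (∏ a ∈ A, (1 - p a)) * RR μ p A B := mul_pos hprodA hpos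
  constructor
  · rw [hden]; exact hdenpos
  · rw [hnum, hden, le_div_iff₀ hdenpos]
    have hq : (0:ℝ) ≤ 1 - p v := by linarith [hp1 v]
    calc (1 - p v) * (Xi G (insert v W) p / Xi G W p) * ((∏ a ∈ A, (1 - p a)) * RR μ p A B)
        = ((1 - p v) * ∏ a ∈ A, (1 - p a)) *
            (Xi G (insert v W) p / Xi G W p * RR μ p A B) := by ring
      _ ≤ ((1 - p v) * ∏ a ∈ A, (1 - p a)) * RR μ p (insert v A) B :=
          mul_le_mul_of_nonneg_left hkey (mul_nonneg hq hprodA.le)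
      _ = (1 - p v) * ((∏ a ∈ A, (1 - p a)) * RR μ p (insert v A) B) := by ring
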